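/- Let μ ≥ 1, ℓ ≥ 0, m ≥ 0 be integers with gcd(2ℓ+1, 2m+2) = 1, set M = 2ℓ + 4m + 5 and σ = 2·(2m+2)²·k. Then for every pair (κ, λ) ∈ {(1,0), (1,1)} and every integer k with gcd(k, M) = 1, one has H_M( q^σ · f((−1)^κ q^{(2m+2)k}, (−1)^κ q^{μM−(2m+2)k})^{2ℓ+1} · f((−1)^λ q^{(2ℓ+1)k}, (−1)^λ q^{2μM−(2ℓ+1)k})^{2m+2} ) = 0. -/

import Mathlib

/-!
Common setup: Ramanujan theta series as formal Laurent series over `ℚ`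
(`LaurentSeries ℚ = HahnSeries ℤ ℚ`), and the huffing operator `H_M`.
-/

noncomputable section

open scoped Classical

namespace ThetaVanish

/-- A subset of `ℤ` that is bounded below is partially well-ordered. -/
theorem isPWO_of_subset_Ici {a : ℤ} {s : Set ℤ} (h : s ⊆ Set.Ici a) : s.IsPWO := by
  have hWF : s.IsWF := by
    rw [Set.isWF_iff_no_descending_seq]
    intro f hf hmem
    have key : ∀ n : ℕ, f n + n ≤ f 0 := by
      intro n
      induction n with
      | zero => simp
      | succ k ih =>
        have h2 : f (k + 1) < f k := hf (Nat.lt_succ_self k)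
        push_cast
        push_cast at ih
        omega
    have h1 := key (f 0 - a + 1).toNat
    have h2 : a ≤ f ((f 0 - a + 1).toNat) := h (hmem _)
    have h3 : a ≤ f 0 := h (hmem 0)
    omega
  exact hWF.isPWO

/-- The coefficient of `q^N` in Ramanujan's theta series `f(ε q^r, ε q^s)`:
the (finite, when `r + s > 0`) sum of `ε^n` over all integers `n` with
`r·n(n+1)/2 + s·n(n-1)/2 = N`. -/
def thetaCoeff (ε r s : ℤ) : ℤ → ℚ := fun N =>
  ∑ᶠ n : ℤ, if r * (n * (n + 1) / 2) + s * (n * (n - 1) / 2) = N then (ε : ℚ) ^ n else 0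

theorem thetaCoeff_support (ε r s : ℤ) (h : 0 < r + s) :
    Function.support (thetaCoeff ε r s) ⊆ Set.Ici (-(r - s) ^ 2) := by
  intro N hN
  simp only [Function.mem_support, ne_eq] at hN
  rw [Set.mem_Ici]
  by_contra hcon
  push_neg at hcon
  apply hN
  apply finsum_eq_zero_of_forall_eq_zero
  intro n
  rw [if_neg]
  intro hQ
  obtain ⟨c, hc⟩ := Int.even_mul_succ_self n
  obtain ⟨e, he⟩ := Int.even_mul_pred_self n
  have hc' : n * (n + 1) = 2 * c := by omega
  have he' : n * (n - 1) = 2 * e := by omega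
  have e1 : n * (n + 1) / 2 = c := by omega
  have e2 : n * (n - 1) / 2 = e := by omega
  rw [e1, e2] at hQ
  have key : 2 * N = (r + s) * n ^ 2 + (r - s) * n := by
    linear_combination -2 * hQ - r * hc' - s * he'
  nlinarith [sq_nonneg (2 * n + r - s), sq_nonneg (r - s),
    mul_nonneg (show (0:ℤ) ≤ r + s - 1 by omega) (sq_nonneg n)]

/-- Ramanujan's theta series `f(ε q^r, ε q^s)` (for a sign `ε ∈ {1, -1}` and
`r + s > 0`), as a formal Laurent series over `ℚ`; junk value `0` if `r + s ≤ 0`. -/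
def theta (ε r s : ℤ) : LaurentSeries ℚ :=
  if h : 0 < r + s then
    { coeff := thetaCoeff ε r s
      isPWO_support' := isPWO_of_subset_Ici (thetaCoeff_support ε r s h) }
  else 0

/-- The huffing operator `H_M`: keep only the coefficients whose index is a
multiple of `M`. -/
def huff (M : ℤ) (G : LaurentSeries ℚ) : LaurentSeries ℚ where
  coeff N := if M ∣ N then G.coeff N else 0
  isPWO_support' := by
    apply Set.IsPWO.mono G.isPWO_support
    intro N hN
    simp only [Function.mem_support, ne_eq] at hN
    rw [HahnSeries.mem_support]
    by_cases hd : M ∣ N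
    · rwa [if_pos hd] at hN
    · exact absurd (if_neg hd) hN


/-- The exponent of the `n`-th term of `f(ε q^r, ε q^s)`. -/
def qexp (r s n : ℤ) : ℤ := r * (n * (n + 1) / 2) + s * (n * (n - 1) / 2)

lemma two_mul_succ (n : ℤ) : 2 * (n * (n + 1) / 2) = n * (n + 1) := by
  obtain ⟨c, hc⟩ := Int.even_mul_succ_self n
  omega

lemma two_mul_pred (n : ℤ) : 2 * (n * (n - 1) / 2) = n * (n - 1) := by
  obtain ⟨c, hc⟩ := Int.even_mul_pred_self n
  omega

lemma qexp_eq (r s n : ℤ) : qexp r s n = r * n + (r + s) * (n * (n - 1) / 2) := by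
  have hQ := two_mul_succ n
  have hP := two_mul_pred n
  have hQP : n * (n + 1) / 2 = n + n * (n - 1) / 2 := by
    have : n * (n + 1) = n * (n - 1) + 2 * n := by ring
    omega
  rw [qexp, hQP]; ring

lemma qexp_shift (r s n d : ℤ) :
    qexp r s (n + d) = qexp r s n + r * d + (r + s) * (d * (d - 1) / 2)
      + (r + s) * (d * n) := by
  rw [qexp_eq, qexp_eq]
  have hP : (n + d) * (n + d - 1) / 2 = n * (n - 1) / 2 + d * (d - 1) / 2 + d * n := by
    have h1 := two_mul_pred (n + d)
    have h2 := two_mul_pred n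
    have h3 := two_mul_pred d
    have : (n + d) * (n + d - 1) = n * (n - 1) + d * (d - 1) + 2 * (d * n) := by ring
    omega
  rw [hP]; ring

lemma qexp_key (r s n : ℤ) : 2 * qexp r s n = (r + s) * n ^ 2 + (r - s) * n := by
  have hQ := two_mul_succ n
  have hP := two_mul_pred n
  have h1 : n * (n + 1) = n ^ 2 + n := by ring
  have h2 : n * (n - 1) = n ^ 2 - n := by ring
  rw [qexp]
  linear_combination r * hQ + s * hP + r * h1 + s * h2

lemma qexp_lb {r s : ℤ} (h : 0 < r + s) (n : ℤ) : -(r - s) ^ 2 ≤ qexp r s n := by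
  have key := qexp_key r s n
  nlinarith [sq_nonneg (2 * n + r - s), sq_nonneg (r - s),
    mul_nonneg (show (0:ℤ) ≤ r + s - 1 by omega) (sq_nonneg n)]

lemma qexp_fiber_bound {r s : ℤ} (h : 0 < r + s) (g n : ℤ) (he : qexp r s n = g) :
    n ∈ Set.Icc (-(4 * |g| + (r - s) ^ 2 + 1)) (4 * |g| + (r - s) ^ 2 + 1) := by
  have key := qexp_key r s n
  rw [he] at key
  have ha1 : g ≤ |g| := le_abs_self g
  have ha2 : -g ≤ |g| := neg_le_abs g
  have hsq : n ^ 2 ≤ 4 * |g| + (r - s) ^ 2 := by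
    nlinarith [sq_nonneg (2 * n + (r - s)), sq_nonneg (2 * n - (r - s)),
      mul_nonneg (show (0:ℤ) ≤ r + s - 1 by omega) (sq_nonneg n)]
  constructor <;> nlinarith [sq_nonneg (n + 1), sq_nonneg (n - 1), abs_nonneg g]

open HahnSeries

/-- The summable family of monomials making up a theta series. -/
def thetaFam (ε r s : ℤ) (h : 0 < r + s) : SummableFamily ℤ ℚ ℤ where
  toFun n := HahnSeries.single (qexp r s n) ((ε : ℚ) ^ n)
  isPWO_iUnion_support' := by
    apply isPWO_of_subset_Ici (a := -(r - s) ^ 2)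
    intro N hN
    simp only [Set.mem_iUnion] at hN
    obtain ⟨n, hn⟩ := hN
    have := HahnSeries.support_single_subset hn
    simp only [Set.mem_singleton_iff] at this
    subst this
    exact qexp_lb h n
  finite_co_support' g := by
    apply Set.Finite.subset (Set.finite_Icc
      (-(4 * |g| + (r - s) ^ 2 + 1)) (4 * |g| + (r - s) ^ 2 + 1))
    intro n hn
    simp only [Set.mem_setOf_eq, HahnSeries.coeff_single] at hn
    by_cases hg : g = qexp r s n
    · exact qexp_fiber_bound h g n hg.symm
    · simp [hg] at hn

lemma thetaFam_apply (ε r s : ℤ) (h : 0 < r + s) (n : ℤ) :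
    thetaFam ε r s h n = HahnSeries.single (qexp r s n) ((ε : ℚ) ^ n) := rfl

lemma thetaFam_hsum (ε r s : ℤ) (h : 0 < r + s) :
    (thetaFam ε r s h).hsum = theta ε r s := by
  ext N
  rw [HahnSeries.SummableFamily.coeff_hsum, theta, dif_pos h]
  show _ = thetaCoeff ε r s N
  have hrfl : thetaCoeff ε r s N = ∑ᶠ n : ℤ, if qexp r s n = N then (ε : ℚ) ^ n else 0 := rfl
  rw [hrfl]
  apply finsum_congr
  intro n
  rw [thetaFam_apply, HahnSeries.coeff_single]
  by_cases hh : qexp r s n = N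
  · simp [hh]
  · simp [hh, Ne.symm hh]

open HahnSeries.SummableFamily in
/-- Summable family for powers of a series presented as a summable family over `ℤ`. -/
def powFam (F : SummableFamily ℤ ℚ ℤ) : (n : ℕ) → SummableFamily ℤ ℚ (Fin n → ℤ)
  | 0 => HahnSeries.SummableFamily.Equiv (Equiv.ofUnique Unit (Fin 0 → ℤ)) (HahnSeries.SummableFamily.single () 1)
  | (n + 1) => HahnSeries.SummableFamily.Equiv (Fin.consEquiv fun _ => ℤ) (HahnSeries.SummableFamily.smul F (powFam F n))

lemma powFam_hsum (F : SummableFamily ℤ ℚ ℤ) (n : ℕ) :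
    (powFam F n).hsum = F.hsum ^ n := by
  induction n with
  | zero => simp [powFam]
  | succ n ih =>
    rw [powFam, HahnSeries.SummableFamily.hsum_equiv,
      HahnSeries.SummableFamily.smul_hsum, HahnSeries.of_symm_smul_of_eq_mul,
      ih, pow_succ]
    ring

lemma powFam_apply {F : SummableFamily ℤ ℚ ℤ} {E : ℤ → ℤ} {c : ℤ → ℚ}
    (hF : ∀ n, F n = HahnSeries.single (E n) (c n)) (n : ℕ) (v : Fin n → ℤ) :
    powFam F n v = HahnSeries.single (∑ i, E (v i)) (∏ i, c (v i)) := by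
  induction n with
  | zero =>
    show (HahnSeries.SummableFamily.single () (1 : HahnSeries ℤ ℚ)) ((Equiv.ofUnique Unit (Fin 0 → ℤ)).symm v) = _
    simp
  | succ n ih =>
    show (HahnSeries.SummableFamily.smul F (powFam F n))
      ((Fin.consEquiv fun _ => ℤ).symm v) = _
    rw [HahnSeries.SummableFamily.smul_toFun, HahnSeries.of_symm_smul_of_eq_mul]
    show F (v 0) * powFam F n (fun i => v i.succ) = _
    rw [hF, ih, HahnSeries.single_mul_single, Fin.sum_univ_succ, Fin.prod_univ_succ]


lemma sum_qexp_eq (r s : ℤ) {n' : ℕ} (x : Fin n' → ℤ) :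
    ∑ i, qexp r s (x i) = r * (∑ i, x i) + (r + s) * ∑ i, x i * (x i - 1) / 2 := by
  rw [Finset.mul_sum, Finset.mul_sum, ← Finset.sum_add_distrib]
  exact Finset.sum_congr rfl fun i _ => by rw [qexp_eq]

lemma sum_qexp_shift (r s d : ℤ) {n' : ℕ} (x : Fin n' → ℤ) :
    ∑ i, qexp r s (x i + d) = (∑ i, qexp r s (x i))
      + (n' : ℤ) * (r * d + (r + s) * (d * (d - 1) / 2))
      + (r + s) * d * (∑ i, x i) := by
  have h : ∀ i : Fin n', qexp r s (x i + d)
      = qexp r s (x i) + (r * d + (r + s) * (d * (d - 1) / 2)) + ((r + s) * d) * x i :=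
    fun i => by rw [qexp_shift]; ring
  rw [Finset.sum_congr rfl fun i _ => h i, Finset.sum_add_distrib, Finset.sum_add_distrib,
    Finset.sum_const, Finset.card_univ, Fintype.card_fin, nsmul_eq_mul, ← Finset.mul_sum]

lemma sum_sub_const {n' : ℕ} (x : Fin n' → ℤ) (c : ℤ) :
    ∑ i, (x i - c) = (∑ i, x i) - (n' : ℤ) * c := by
  rw [Finset.sum_sub_distrib, Finset.sum_const, Finset.card_univ, Fintype.card_fin, nsmul_eq_mul]

lemma sum_add_const {n' : ℕ} (x : Fin n' → ℤ) (c : ℤ) :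
    ∑ i, (x i + c) = (∑ i, x i) + (n' : ℤ) * c := by
  rw [Finset.sum_add_distrib, Finset.sum_const, Finset.card_univ, Fintype.card_fin, nsmul_eq_mul]

lemma prod_zpow_sub (e : ℚ) (he : e ≠ 0) (d : ℤ) {n' : ℕ} (x : Fin n' → ℤ) :
    ∏ i, e ^ (x i - d) = (∏ i, e ^ (x i)) / (e ^ d) ^ n' := by
  simp only [zpow_sub₀ he]
  rw [Finset.prod_div_distrib, Finset.prod_const, Finset.card_univ, Fintype.card_fin]

lemma prod_zpow_add (e : ℚ) (he : e ≠ 0) (d : ℤ) {n' : ℕ} (x : Fin n' → ℤ) :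
    ∏ i, e ^ (x i + d) = (∏ i, e ^ (x i)) * (e ^ d) ^ n' := by
  simp only [zpow_add₀ he]
  rw [Finset.prod_mul_distrib, Finset.prod_const, Finset.card_univ, Fintype.card_fin]

/-- The shift amount of the sign-reversing involution. -/
def nuF (ℓ m M : ℤ) {b' a' : ℕ} (p : (Fin b' → ℤ) × (Fin a' → ℤ)) : ℤ :=
  (2 * ((∑ i, p.1 i) - 2 * ∑ j, p.2 j) + 2 * (2 * m + 2) - (2 * ℓ + 1)) / M

/-- The sign-reversing involution. -/
def involF (ℓ m M : ℤ) {b' a' : ℕ} (p : (Fin b' → ℤ) × (Fin a' → ℤ)) :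
    (Fin b' → ℤ) × (Fin a' → ℤ) :=
  (fun i => p.1 i - nuF ℓ m M p, fun j => p.2 j + nuF ℓ m M p)

lemma involF_fst (ℓ m M : ℤ) {b' a' : ℕ} (p : (Fin b' → ℤ) × (Fin a' → ℤ)) (i : Fin b') :
    (involF ℓ m M p).1 i = p.1 i - nuF ℓ m M p := rfl

lemma involF_snd (ℓ m M : ℤ) {b' a' : ℕ} (p : (Fin b' → ℤ) × (Fin a' → ℤ)) (j : Fin a') :
    (involF ℓ m M p).2 j = p.2 j + nuF ℓ m M p := rfl

/-- **Theorem (Type II, eq. (1.13))**: with `gcd(2ℓ+1, 2m+2) = 1`,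
`M = 2ℓ + 4m + 5` and `σ = 2(2m+2)²k`, for `(κ, λ) ∈ {(1,0), (1,1)}`
and `gcd(k, M) = 1`,
`H_M(q^σ · f((-1)^κ q^{(2m+2)k}, (-1)^κ q^{μM-(2m+2)k})^{2ℓ+1} ·
  f((-1)^λ q^{(2ℓ+1)k}, (-1)^λ q^{2μM-(2ℓ+1)k})^{2m+2}) = 0`. -/
theorem statement9 (μ ℓ m k M σ : ℤ) (hμ : 1 ≤ μ) (hℓ : 0 ≤ ℓ) (hm : 0 ≤ m)
    (hcop : Int.gcd (2 * ℓ + 1) (2 * m + 2) = 1)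
    (hM : M = 2 * ℓ + 4 * m + 5) (hσ : σ = 2 * (2 * m + 2) ^ 2 * k)
    (κ lam : ℕ) (hκlam : (κ = 1 ∧ lam = 0) ∨ (κ = 1 ∧ lam = 1))
    (hk : Int.gcd k M = 1) :
    huff M (HahnSeries.single σ (1 : ℚ)
      * theta ((-1) ^ κ) ((2 * m + 2) * k) (μ * M - (2 * m + 2) * k) ^ (2 * ℓ + 1)
      * theta ((-1) ^ lam) ((2 * ℓ + 1) * k)
          (2 * μ * M - (2 * ℓ + 1) * k) ^ (2 * m + 2)) = 0 := by
  obtain ⟨hκ, hlam⟩ : κ = 1 ∧ (lam = 0 ∨ lam = 1) := by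
    rcases hκlam with ⟨h1, h2⟩ | ⟨h1, h2⟩ <;> exact ⟨h1, by omega⟩
  have hM0 : M ≠ 0 := by omega
  have hMpos : (0 : ℤ) < μ * M := by nlinarith
  set b' : ℕ := (2 * ℓ + 1).toNat with hb'def
  set a' : ℕ := (2 * m + 2).toNat with ha'def
  have hb'z : ((b' : ℕ) : ℤ) = 2 * ℓ + 1 := by omega
  have ha'z : ((a' : ℕ) : ℤ) = 2 * m + 2 := by omega
  have hb'odd : Odd b' := ⟨ℓ.toNat, by omega⟩
  have ha'even : Even a' := ⟨(m + 1).toNat, by omega⟩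
  set ε₁ : ℤ := (-1) ^ κ with hε₁def
  set ε₂ : ℤ := (-1) ^ lam with hε₂def
  have he₁ : ((ε₁ : ℤ) : ℚ) = -1 := by rw [hε₁def, hκ]; norm_num
  have he₂ : ((ε₂ : ℤ) : ℚ) = 1 ∨ ((ε₂ : ℤ) : ℚ) = -1 := by
    rcases hlam with h | h <;> rw [hε₂def, h] <;> norm_num
  have he₁0 : ((ε₁ : ℤ) : ℚ) ≠ 0 := by rw [he₁]; norm_num
  have he₂0 : ((ε₂ : ℤ) : ℚ) ≠ 0 := by rcases he₂ with h | h <;> rw [h] <;> norm_num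
  set r₁ : ℤ := (2 * m + 2) * k with hr₁def
  set s₁ : ℤ := μ * M - (2 * m + 2) * k with hs₁def
  set r₂ : ℤ := (2 * ℓ + 1) * k with hr₂def
  set s₂ : ℤ := 2 * μ * M - (2 * ℓ + 1) * k with hs₂def
  have h₁ : 0 < r₁ + s₁ := by rw [hr₁def, hs₁def]; linarith
  have h₂ : 0 < r₂ + s₂ := by rw [hr₂def, hs₂def]; linarith
  have ht₁ : r₁ + s₁ = μ * M := by rw [hr₁def, hs₁def]; ring
  have ht₂ : r₂ + s₂ = 2 * (μ * M) := by rw [hr₂def, hs₂def]; ring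
  set T := (HahnSeries.single σ (1 : ℚ)) •
    HahnSeries.SummableFamily.smul
      (powFam (thetaFam ε₁ r₁ s₁ h₁) b') (powFam (thetaFam ε₂ r₂ s₂ h₂) a') with hTdef
  have hhs : T.hsum = HahnSeries.single σ (1 : ℚ)
      * theta ε₁ r₁ s₁ ^ (2 * ℓ + 1) * theta ε₂ r₂ s₂ ^ (2 * m + 2) := by
    rw [hTdef, HahnSeries.SummableFamily.hsum_smul,
      HahnSeries.SummableFamily.smul_hsum, HahnSeries.of_symm_smul_of_eq_mul,
      powFam_hsum, powFam_hsum, thetaFam_hsum, thetaFam_hsum,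
      ← zpow_natCast (theta ε₁ r₁ s₁) b', ← zpow_natCast (theta ε₂ r₂ s₂) a',
      hb'z, ha'z, mul_assoc]
  rw [← hhs]
  -- the member description of the family `T`
  have hTp : ∀ p : (Fin b' → ℤ) × (Fin a' → ℤ),
      T p = HahnSeries.single
        (σ + (∑ i, qexp r₁ s₁ (p.1 i) + ∑ j, qexp r₂ s₂ (p.2 j)))
        ((∏ i, ((ε₁ : ℤ) : ℚ) ^ (p.1 i)) * ∏ j, ((ε₂ : ℤ) : ℚ) ^ (p.2 j)) := by
    intro p
    rw [hTdef, HahnSeries.SummableFamily.smul_apply, HahnSeries.of_symm_smul_of_eq_mul,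
      HahnSeries.SummableFamily.smul_toFun, HahnSeries.of_symm_smul_of_eq_mul,
      powFam_apply (thetaFam_apply ε₁ r₁ s₁ h₁), powFam_apply (thetaFam_apply ε₂ r₂ s₂ h₂),
      HahnSeries.single_mul_single, HahnSeries.single_mul_single, one_mul]
  ext N
  rw [HahnSeries.coeff_zero]
  show (if M ∣ N then (T.hsum).coeff N else 0) = 0
  split_ifs with hdvd
  swap
  · rfl
  rw [HahnSeries.SummableFamily.coeff_hsum]
  have hfin : (Function.support fun a => (T a).coeff N).Finite := T.finite_co_support N
  rw [finsum_eq_sum _ hfin]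
  -- the master fact about the involution on the support
  have hbig : ∀ p : (Fin b' → ℤ) × (Fin a' → ℤ), (T p).coeff N ≠ 0 →
      (T (involF ℓ m M p)).coeff N = -(T p).coeff N ∧ involF ℓ m M p ≠ p ∧
        involF ℓ m M (involF ℓ m M p) = p := by
    intro p hp
    rw [hTp p, HahnSeries.coeff_single] at hp
    by_cases hcase : N = σ + (∑ i, qexp r₁ s₁ (p.1 i) + ∑ j, qexp r₂ s₂ (p.2 j))
    swap
    · rw [if_neg hcase] at hp; exact absurd rfl hp
    rw [if_pos hcase] at hp
    -- divisibility : M divides the numerator of ν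
    have hw : M ∣ 2 * ((∑ i, p.1 i) - 2 * ∑ j, p.2 j) + 2 * (2 * m + 2) - (2 * ℓ + 1) := by
      have e1 := sum_qexp_eq r₁ s₁ p.1
      have e2 := sum_qexp_eq r₂ s₂ p.2
      have hNz : N = k * ((2 * m + 2) * (2 * (2 * m + 2) + (∑ i, p.1 i) - 2 * ∑ j, p.2 j))
          + M * (k * (∑ j, p.2 j) + μ * (∑ i, (p.1 i) * (p.1 i - 1) / 2)
            + 2 * μ * (∑ j, (p.2 j) * (p.2 j - 1) / 2)) := by
        rw [hcase, e1, e2, ht₁, ht₂, hr₁def, hr₂def, hσ, hM]; ring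
      have h1 : M ∣ k * ((2 * m + 2) * (2 * (2 * m + 2) + (∑ i, p.1 i) - 2 * ∑ j, p.2 j)) := by
        have h0 := dvd_sub hdvd (dvd_mul_right M (k * (∑ j, p.2 j)
          + μ * (∑ i, (p.1 i) * (p.1 i - 1) / 2) + 2 * μ * (∑ j, (p.2 j) * (p.2 j - 1) / 2)))
        rw [hNz, add_sub_cancel_right] at h0
        exact h0
      have hcoMk : IsCoprime (M : ℤ) k := by
        rw [Int.isCoprime_iff_gcd_eq_one, Int.gcd_comm]; exact hk
      have h2 : M ∣ (2 * m + 2) * (2 * (2 * m + 2) + (∑ i, p.1 i) - 2 * ∑ j, p.2 j) :=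
        hcoMk.dvd_of_dvd_mul_left h1
      have hcoMa : IsCoprime (M : ℤ) (2 * m + 2) := by
        have hba : IsCoprime (2 * m + 2 : ℤ) (2 * ℓ + 1) := by
          rw [Int.isCoprime_iff_gcd_eq_one, Int.gcd_comm]; exact hcop
        have h3 := hba.add_mul_left_right 2
        rw [show (2 * ℓ + 1) + (2 * m + 2) * 2 = 2 * ℓ + 4 * m + 5 by ring, ← hM] at h3
        exact h3.symm
      have h3 : M ∣ 2 * (2 * m + 2) + (∑ i, p.1 i) - 2 * ∑ j, p.2 j := by
        have := hcoMa.dvd_of_dvd_mul_left h2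
        convert this using 2
      have h4 : 2 * ((∑ i, p.1 i) - 2 * ∑ j, p.2 j) + 2 * (2 * m + 2) - (2 * ℓ + 1)
          = 2 * (2 * (2 * m + 2) + (∑ i, p.1 i) - 2 * ∑ j, p.2 j) - M := by rw [hM]; ring
      rw [h4]
      exact dvd_sub (h3.mul_left 2) dvd_rfl
    have hnu : M * nuF ℓ m M p
        = 2 * ((∑ i, p.1 i) - 2 * ∑ j, p.2 j) + 2 * (2 * m + 2) - (2 * ℓ + 1) :=
      Int.mul_ediv_cancel' hw
    have hodd : Odd (nuF ℓ m M p) := by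
      have hwodd : Odd (2 * ((∑ i, p.1 i) - 2 * ∑ j, p.2 j) + 2 * (2 * m + 2) - (2 * ℓ + 1)) :=
        ⟨(∑ i, p.1 i) - 2 * (∑ j, p.2 j) + 2 * m + 1 - ℓ, by ring⟩
      rw [← hnu] at hwodd
      exact (Int.odd_mul.mp hwodd).2
    have hν0 : nuF ℓ m M p ≠ 0 := by
      rcases hodd with ⟨c, hc⟩; omega
    -- the exponent is preserved
    have hEx : σ + (∑ i, qexp r₁ s₁ ((involF ℓ m M p).1 i)
        + ∑ j, qexp r₂ s₂ ((involF ℓ m M p).2 j))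
        = σ + (∑ i, qexp r₁ s₁ (p.1 i) + ∑ j, qexp r₂ s₂ (p.2 j)) := by
      simp only [involF_fst, involF_snd, sub_eq_add_neg]
      rw [sum_qexp_shift r₁ s₁ (-(nuF ℓ m M p)) p.1, sum_qexp_shift r₂ s₂ (nuF ℓ m M p) p.2,
        hb'z, ha'z, ht₁, ht₂, hr₁def, hr₂def]
      have hDm := two_mul_pred (-(nuF ℓ m M p))
      have hDp := two_mul_pred (nuF ℓ m M p)
      refine mul_left_cancel₀ (two_ne_zero) ?_
      linear_combination (2 * ℓ + 1) * μ * M * hDm + 2 * (2 * m + 2) * μ * M * hDp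
        + μ * M * (nuF ℓ m M p) * hnu - μ * M * (nuF ℓ m M p) ^ 2 * hM
    -- the sign flips
    have hC : (∏ i, ((ε₁ : ℤ) : ℚ) ^ ((involF ℓ m M p).1 i))
        * ∏ j, ((ε₂ : ℤ) : ℚ) ^ ((involF ℓ m M p).2 j)
        = -((∏ i, ((ε₁ : ℤ) : ℚ) ^ (p.1 i)) * ∏ j, ((ε₂ : ℤ) : ℚ) ^ (p.2 j)) := by
      simp only [involF_fst, involF_snd]
      rw [prod_zpow_sub _ he₁0, prod_zpow_add _ he₂0]
      have hx1 : (((ε₁ : ℤ) : ℚ) ^ (nuF ℓ m M p)) ^ b' = -1 := by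
        rw [he₁, hodd.neg_one_zpow, hb'odd.neg_one_pow]
      have hx2 : (((ε₂ : ℤ) : ℚ) ^ (nuF ℓ m M p)) ^ a' = 1 := by
        rcases he₂ with h | h
        · rw [h, one_zpow, one_pow]
        · rw [h, hodd.neg_one_zpow, ha'even.neg_one_pow]
      rw [hx1, hx2]
      ring
    -- ν negates under the involution
    have hnu2 : nuF ℓ m M (involF ℓ m M p) = -(nuF ℓ m M p) := by
      have hs1 : ∑ i, (involF ℓ m M p).1 i = (∑ i, p.1 i) - (b' : ℤ) * nuF ℓ m M p := by
        simp only [involF_fst]; exact sum_sub_const p.1 (nuF ℓ m M p)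
      have hs2 : ∑ j, (involF ℓ m M p).2 j = (∑ j, p.2 j) + (a' : ℤ) * nuF ℓ m M p := by
        simp only [involF_snd]; exact sum_add_const p.2 (nuF ℓ m M p)
      have hw' : 2 * ((∑ i, (involF ℓ m M p).1 i) - 2 * ∑ j, (involF ℓ m M p).2 j)
          + 2 * (2 * m + 2) - (2 * ℓ + 1) = M * (-(nuF ℓ m M p)) := by
        rw [hs1, hs2, hb'z, ha'z]
        linear_combination -hnu + 2 * (nuF ℓ m M p) * hM
      show (2 * ((∑ i, (involF ℓ m M p).1 i) - 2 * ∑ j, (involF ℓ m M p).2 j)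
          + 2 * (2 * m + 2) - (2 * ℓ + 1)) / M = -(nuF ℓ m M p)
      rw [hw']
      exact Int.mul_ediv_cancel_left _ hM0
    refine ⟨?_, ?_, ?_⟩
    · rw [hTp, hTp, HahnSeries.coeff_single, HahnSeries.coeff_single,
        if_pos hcase, if_pos (hcase.trans hEx.symm)]
      exact hC
    · intro hcon
      have h0 : 0 < b' := by omega
      have := congrFun (congrArg Prod.fst hcon) ⟨0, h0⟩
      rw [involF_fst] at this
      omega
    · have hfst : (involF ℓ m M (involF ℓ m M p)).1 = p.1 := by
        funext i
        rw [involF_fst, involF_fst, hnu2]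
        ring
      have hsnd : (involF ℓ m M (involF ℓ m M p)).2 = p.2 := by
        funext j
        rw [involF_snd, involF_snd, hnu2]
        ring
      exact Prod.ext hfst hsnd
  -- conclude with the sign-reversing involution
  have hmem : ∀ q : (Fin b' → ℤ) × (Fin a' → ℤ),
      q ∈ hfin.toFinset ↔ (T q).coeff N ≠ 0 := by
    intro q
    rw [Set.Finite.mem_toFinset]
    exact Iff.rfl
  refine Finset.sum_involution (fun p _ => involF ℓ m M p) ?_ ?_ ?_ ?_
  · intro p ha
    have h := (hbig p ((hmem p).mp ha)).1
    rw [h]; ring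
  · intro p ha _
    exact (hbig p ((hmem p).mp ha)).2.1
  · intro p ha
    rw [hmem]
    rw [(hbig p ((hmem p).mp ha)).1]
    exact neg_ne_zero.mpr ((hmem p).mp ha)
  · intro p ha
    exact (hbig p ((hmem p).mp ha)).2.2

end ThetaVanish
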